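/- Let n ≥ 1 and let θ_0 ⊇ θ_1 ⊇ ⋯ ⊇ θ_n be a descending chain of congruences on the additive monoid (ℕ,+). Then the relation σ := ⋃_{q=0}^{n} {((i,α),(j,α)) : α ∈ D_q, (i,j) ∈ θ_q} is a congruence on the twisted partition monoid P_n^Φ. -/

import Mathlib

namespace TPM

/-- Vertex set `{1,…,n} ∪ {1',…,n'}`: `Sum.inl` = unprimed (upper row),
`Sum.inr` = primed (lower row). -/
abbrev V (n : ℕ) := Fin n ⊕ Fin n

/-- The partition monoid `P_n`: set partitions of the `2n`-element set `V n`,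
encoded as equivalence relations (setoids). -/
abbrev PM (n : ℕ) := Setoid (V n)

/-- Three-row vertex set of the product graph: top / middle / bottom. -/
abbrev W (n : ℕ) := Fin n ⊕ (Fin n ⊕ Fin n)

variable {n : ℕ}

/-- First factor: unprimed ↦ top, primed ↦ middle. -/
def topMid : V n → W n
  | Sum.inl i => Sum.inl i
  | Sum.inr i => Sum.inr (Sum.inl i)

/-- Second factor: unprimed ↦ middle, primed ↦ bottom. -/
def midBot : V n → W n
  | Sum.inl i => Sum.inr (Sum.inl i)
  | Sum.inr i => Sum.inr (Sum.inr i)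

/-- Embedding of `V n` as top and bottom rows of the three-row set. -/
def topBot : V n → W n
  | Sum.inl i => Sum.inl i
  | Sum.inr i => Sum.inr (Sum.inr i)

/-- Edge relation of the product graph `Γ(α,β)`. -/
def graphRel (α β : PM n) (x y : W n) : Prop :=
  (∃ u v : V n, α.r u v ∧ x = topMid u ∧ y = topMid v) ∨
  (∃ u v : V n, β.r u v ∧ x = midBot u ∧ y = midBot v)

/-- Connectivity (equivalence closure of the edge relation) in `Γ(α,β)`. -/
def conn (α β : PM n) : W n → W n → Prop := Relation.EqvGen (graphRel α β)

/-- Connectivity in `Γ(α,β)`, as a setoid on the three-row vertex set. -/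
def connSetoid (α β : PM n) : Setoid (W n) :=
  ⟨conn α β, Relation.EqvGen.is_equivalence _⟩

/-- The product of two partitions: `x,y` lie in the same block of `αβ` iff they are
connected in `Γ(α,β)`. -/
def pmul (α β : PM n) : PM n :=
  ⟨fun x y => conn α β (topBot x) (topBot y),
    ⟨fun _ => Relation.EqvGen.refl _, fun h => Relation.EqvGen.symm _ _ h, fun h h' => Relation.EqvGen.trans _ _ _ h h'⟩⟩

/-- A vertex of the three-row set lies in the middle row. -/
def isMid (x : W n) : Prop := ∃ i : Fin n, x = Sum.inr (Sum.inl i)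

/-- `Φ(α,β)`: the number of floating components of `Γ(α,β)`, i.e. connected components
all of whose vertices lie in the middle row. -/
noncomputable def Phi (α β : PM n) : ℕ :=
  Nat.card {c : Quotient (connSetoid α β) //
    ∀ x : W n, Quotient.mk (connSetoid α β) x = c → isMid x}

/-- The rank of a partition: the number of transversal blocks (blocks containing both an
unprimed and a primed element). -/
noncomputable def rnk (α : PM n) : ℕ :=
  Nat.card {c : Quotient α //
    (∃ i : Fin n, Quotient.mk α (Sum.inl i) = c) ∧ ∃ i : Fin n, Quotient.mk α (Sum.inr i) = c}

/-- Which row of `V n` a point lies in. -/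
def side : V n → Bool
  | Sum.inl _ => true
  | Sum.inr _ => false

/-- `α̂`: split each transversal of `α` into its unprimed part and its primed part. -/
def hat (α : PM n) : PM n :=
  ⟨fun x y => α.r x y ∧ side x = side y,
    ⟨fun x => ⟨α.iseqv.refl x, rfl⟩,
     fun h => ⟨α.iseqv.symm h.1, h.2.symm⟩,
     fun h h' => ⟨α.iseqv.trans h.1 h'.1, h.2.trans h'.2⟩⟩⟩

/-- The twisted product on `ℕ × P_n`:  `(i,α)(j,β) = (i + j + Φ(α,β), αβ)`. -/
noncomputable def tmul (a b : ℕ × PM n) : ℕ × PM n :=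
  (a.1 + b.1 + Phi a.2 b.2, pmul a.2 b.2)

/-- A congruence on a set equipped with a binary operation: an equivalence relation
compatible with the operation on both sides. -/
def IsCongruence {M : Type*} (mul : M → M → M) (σ : M → M → Prop) : Prop :=
  Equivalence σ ∧ ∀ x y a, σ x y → σ (mul a x) (mul a y) ∧ σ (mul x a) (mul y a)

/-- Green's relation `R`: equality of the right ideals `xM = yM`. -/
def greenR {M : Type*} (mul : M → M → M) (x y : M) : Prop :=
  Set.range (mul x) = Set.range (mul y)

/-- Green's relation `L`: `Mx = My`. -/
def greenL {M : Type*} (mul : M → M → M) (x y : M) : Prop :=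
  Set.range (fun a => mul a x) = Set.range (fun a => mul a y)

/-- The principal two-sided ideal `MxM`. -/
def jSet {M : Type*} (mul : M → M → M) (x : M) : Set M :=
  Set.range (fun p : M × M => mul (mul p.1 x) p.2)

/-- Green's relation `J`: `MxM = MyM`. -/
def greenJ {M : Type*} (mul : M → M → M) (x y : M) : Prop :=
  jSet mul x = jSet mul y

/-- Green's relation `H = R ∩ L`. -/
def greenH {M : Type*} (mul : M → M → M) (x y : M) : Prop :=
  greenR mul x y ∧ greenL mul x y

/-- Green's relation `D = R ∘ L`. -/
def greenD {M : Type*} (mul : M → M → M) (x y : M) : Prop :=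
  ∃ z, greenR mul x z ∧ greenL mul z y

/-- `pd(α,β)` satisfies `P`, where `α` has `p` transversals: there are representatives
`a s` of the upper parts of the `p` (pairwise distinct) transversals of `α`, with `b s`
representing the corresponding lower parts, and a permutation `π` with `P π` such that the
block of `β` containing `a s` contains `b (π s)`.  (For H-related `α, β ∈ D_p` this says
exactly that some representation of the permutational difference `pd(α,β)` satisfies `P`.) -/
def pdIn (p : ℕ) (P : Equiv.Perm (Fin p) → Prop) (α β : PM n) : Prop :=
  ∃ (a b : Fin p → Fin n) (π : Equiv.Perm (Fin p)),
    (∀ s t, α.r (Sum.inl (a s)) (Sum.inl (a t)) → s = t) ∧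
    (∀ s, α.r (Sum.inl (a s)) (Sum.inr (b s))) ∧
    (∀ s, β.r (Sum.inl (a s)) (Sum.inr (b (π s)))) ∧
    P π

/-- The relation `ν_N` on `D_p`, for a subgroup `N ≤ S_p`:  H-related pairs of rank-`p`
partitions whose permutational difference lies in `N`. -/
def nuRel (p : ℕ) (N : Subgroup (Equiv.Perm (Fin p))) (α β : PM n) : Prop :=
  rnk α = p ∧ rnk β = p ∧ greenH pmul α β ∧ pdIn p (· ∈ N) α β

/-- The congruence `(m, m+d)^♯` on the additive monoid `ℕ` (intended for `d ≥ 1`). -/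
def natCong (m d : ℕ) (i j : ℕ) : Prop :=
  i = j ∨ (m ≤ i ∧ m ≤ j ∧ i % d = j % d)

/-- `min θ ≤ i` for a congruence `θ` on `ℕ` (with `min Δ_ℕ = ∞`). -/
def minLE (θ : ℕ → ℕ → Prop) (i : ℕ) : Prop :=
  ∃ a b, θ a b ∧ a ≠ b ∧ a ≤ i

/-- `k ≤ min θ` for a congruence `θ` on `ℕ` (with `min Δ_ℕ = ∞`). -/
def leMin (k : ℕ) (θ : ℕ → ℕ → Prop) : Prop :=
  ∀ a b, θ a b → a ≠ b → k ≤ a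

/-- The possible entries of a C-matrix. -/
inductive CEntry : Type
  | delta | muUp | muDown | mu | lam | rho | R
  | nsym (q : ℕ) (N : Subgroup (Equiv.Perm (Fin q)))

/-- Whether a C-matrix entry is an N-symbol. -/
def isNsym : CEntry → Prop
  | CEntry.nsym _ _ => True
  | _ => False

/-- The allowed values of the symbol `ζ` in row types RT2, RT5, RT6. -/
def isZeta (e : CEntry) : Prop :=
  e = CEntry.mu ∨ e = CEntry.muUp ∨ e = CEntry.muDown ∨ e = CEntry.delta

/-- The allowed values of the symbol `ξ` in row types RT4–RT7: any of `μ,ρ,λ,R` if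
`d = 1`, and only `μ` if `d > 1`. -/
def xiOK (d : ℕ) (e : CEntry) : Prop :=
  e = CEntry.mu ∨ (d = 1 ∧ (e = CEntry.rho ∨ e = CEntry.lam ∨ e = CEntry.R))

/-- Row type RT1 for rows 0 and 1: all entries `Δ`. -/
def RT1 (M0 M1 : ℕ → CEntry) : Prop :=
  (∀ i, M0 i = CEntry.delta) ∧ (∀ i, M1 i = CEntry.delta)

/-- Row type RT2. -/
def RT2 (Θ0 Θ1 : ℕ → ℕ → Prop) (M0 M1 : ℕ → CEntry) : Prop :=
  Θ0 = Eq ∧ Θ1 = Eq ∧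
  ∃ i ζ, isZeta ζ ∧
    (∀ j, j < i → M0 j = CEntry.delta) ∧ (∀ j, i ≤ j → M0 j = CEntry.mu) ∧
    (∀ j, j < i → M1 j = CEntry.delta) ∧ M1 i = ζ ∧ (∀ j, i < j → M1 j = CEntry.mu)

/-- Row type RT3. -/
def RT3 (Θ0 : ℕ → ℕ → Prop) (M0 M1 : ℕ → CEntry) : Prop :=
  ∃ m ξ, Θ0 = natCong m 1 ∧ (ξ = CEntry.rho ∨ ξ = CEntry.lam ∨ ξ = CEntry.R) ∧
    (∀ i, M1 i = CEntry.delta) ∧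
    (∀ j, j < m → M0 j = CEntry.delta) ∧ (∀ j, m ≤ j → M0 j = ξ)

/-- Row type RT4. -/
def RT4 (Θ0 Θ1 : ℕ → ℕ → Prop) (M0 M1 : ℕ → CEntry) : Prop :=
  ∃ m d ξ, 1 ≤ d ∧ Θ0 = natCong m d ∧ Θ1 = natCong m d ∧ xiOK d ξ ∧
    (∀ j, j < m → M0 j = CEntry.delta ∧ M1 j = CEntry.delta) ∧
    (∀ j, m ≤ j → M0 j = ξ ∧ M1 j = ξ)

/-- Row type RT5. -/
def RT5 (Θ0 Θ1 : ℕ → ℕ → Prop) (M0 M1 : ℕ → CEntry) : Prop :=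
  ∃ m d i ξ ζ, 1 ≤ d ∧ i < m ∧ Θ0 = natCong m d ∧ Θ1 = natCong (m + 1) d ∧
    xiOK d ξ ∧ isZeta ζ ∧
    (∀ j, j < i → M0 j = CEntry.delta) ∧ (∀ j, i ≤ j → j < m → M0 j = CEntry.mu) ∧
    (∀ j, m ≤ j → M0 j = ξ) ∧
    (∀ j, j < i → M1 j = CEntry.delta) ∧ M1 i = ζ ∧
    (∀ j, i < j → j ≤ m → M1 j = CEntry.mu) ∧ (∀ j, m < j → M1 j = ξ)

/-- Row type RT6. -/
def RT6 (Θ0 Θ1 : ℕ → ℕ → Prop) (M0 M1 : ℕ → CEntry) : Prop :=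
  ∃ m l d ξ ζ, 1 ≤ d ∧ m < l ∧ Θ0 = natCong m d ∧ Θ1 = natCong l d ∧
    xiOK d ξ ∧ isZeta ζ ∧
    (∀ j, j < m → M0 j = CEntry.delta) ∧ (∀ j, m ≤ j → M0 j = ξ) ∧
    (∀ j, j < l - 1 → M1 j = CEntry.delta) ∧ M1 (l - 1) = ζ ∧ (∀ j, l ≤ j → M1 j = ξ)

/-- Row type RT7. -/
def RT7 (Θ0 Θ1 : ℕ → ℕ → Prop) (M0 M1 : ℕ → CEntry) : Prop :=
  ∃ m l d ξ, 1 ≤ d ∧ 0 < m ∧ m + 1 < l ∧ (l - 1) % d = m % d ∧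
    Θ0 = natCong m d ∧ Θ1 = natCong l d ∧ xiOK d ξ ∧
    (∀ j, j < m - 1 → M0 j = CEntry.delta) ∧ M0 (m - 1) = CEntry.mu ∧
    (∀ j, m ≤ j → M0 j = ξ) ∧
    (∀ j, j < l - 1 → M1 j = CEntry.delta) ∧ M1 (l - 1) = CEntry.mu ∧
    (∀ j, l ≤ j → M1 j = ξ)

/-- Row type RT8 for a row `q ≥ 2`: all entries `Δ`. -/
def RT8 (Mq : ℕ → CEntry) : Prop := ∀ i, Mq i = CEntry.delta

/-- Row type RT9 for a row `q ≥ 2`. -/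
def RT9 (q : ℕ) (Θq : ℕ → ℕ → Prop) (Mq : ℕ → CEntry) : Prop :=
  ∃ (i k : ℕ) (Ns : ℕ → Subgroup (Equiv.Perm (Fin q))),
    i ≤ k ∧ leMin k Θq ∧
    (∀ j, i ≤ j → j ≤ k → Ns j ≠ ⊥ ∧ (Ns j).Normal) ∧
    (∀ j j', i ≤ j → j ≤ j' → j' ≤ k → Ns j ≤ Ns j') ∧
    (∀ j, j < i → Mq j = CEntry.delta) ∧
    (∀ j, i ≤ j → j < k → Mq j = CEntry.nsym q (Ns j)) ∧
    (∀ j, k ≤ j → Mq j = CEntry.nsym q (Ns k))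

/-- Row type RT10 for a row `q ≥ 2`. -/
def RT10 (q : ℕ) (Θq : ℕ → ℕ → Prop) (Mq : ℕ → CEntry) : Prop :=
  ∃ (i m : ℕ) (Ns : ℕ → Subgroup (Equiv.Perm (Fin q))),
    i ≤ m ∧ Θq = natCong m 1 ∧
    (∀ j, i ≤ j → j < m → Ns j ≠ ⊥ ∧ (Ns j).Normal) ∧
    (∀ j j', i ≤ j → j ≤ j' → j' < m → Ns j ≤ Ns j') ∧
    (∀ j, j < i → Mq j = CEntry.delta) ∧
    (∀ j, i ≤ j → j < m → Mq j = CEntry.nsym q (Ns j)) ∧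
    (∀ j, m ≤ j → Mq j = CEntry.R)

/-- A C-pair for `P_n^Φ`: a descending chain `Θ = (θ_0 ⊇ ⋯ ⊇ θ_n)` of congruences on
`(ℕ,+)` together with a matrix `M = (M_{qi})`, `0 ≤ q ≤ n`, `i ∈ ℕ`, whose rows 0 and 1
jointly have one of the types RT1–RT7, whose rows `q ≥ 2` have one of the types RT8–RT10,
and which satisfies the verticality conditions (V1) and (V2). -/
def IsCPair (n : ℕ) (Θ : ℕ → ℕ → ℕ → Prop) (M : ℕ → ℕ → CEntry) : Prop :=
  (∀ q, q ≤ n → IsCongruence (· + ·) (Θ q)) ∧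
  (∀ q r, q ≤ r → r ≤ n → ∀ i j, Θ r i j → Θ q i j) ∧
  (RT1 (M 0) (M 1) ∨ RT2 (Θ 0) (Θ 1) (M 0) (M 1) ∨ RT3 (Θ 0) (M 0) (M 1) ∨
    RT4 (Θ 0) (Θ 1) (M 0) (M 1) ∨ RT5 (Θ 0) (Θ 1) (M 0) (M 1) ∨
    RT6 (Θ 0) (Θ 1) (M 0) (M 1) ∨ RT7 (Θ 0) (Θ 1) (M 0) (M 1)) ∧
  (∀ q, 2 ≤ q → q ≤ n → (RT8 (M q) ∨ RT9 q (Θ q) (M q) ∨ RT10 q (Θ q) (M q))) ∧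
  (∀ q i, 1 ≤ q → q ≤ n → isNsym (M q i) →
    ¬(M (q - 1) i = CEntry.delta ∨ M (q - 1) i = CEntry.muUp ∨
      M (q - 1) i = CEntry.muDown ∨ isNsym (M (q - 1) i))) ∧
  (∀ q i, 2 ≤ q → q ≤ n → M q i = CEntry.R → M (q - 1) i = CEntry.R)

/-- The relation `cg(Θ,M)` on `P_n^Φ` associated with a C-pair `(Θ,M)`: conditions
(C1)–(C8). -/
def cg (n : ℕ) (Θ : ℕ → ℕ → ℕ → Prop) (M : ℕ → ℕ → CEntry)
    (a b : ℕ × PM n) : Prop :=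
  -- (C1)
  (M (rnk a.2) a.1 = CEntry.delta ∧ M (rnk b.2) b.1 = CEntry.delta ∧
    Θ (rnk a.2) a.1 b.1 ∧ a.2 = b.2) ∨
  -- (C2)
  (M (rnk a.2) a.1 = CEntry.R ∧ M (rnk b.2) b.1 = CEntry.R) ∨
  -- (C3)
  (∃ p N, M (rnk a.2) a.1 = CEntry.nsym p N ∧ M (rnk b.2) b.1 = CEntry.nsym p N ∧
    Θ (rnk a.2) a.1 b.1 ∧ rnk a.2 = p ∧ greenH pmul a.2 b.2 ∧ pdIn p (· ∈ N) a.2 b.2) ∨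
  -- (C4)
  (M (rnk a.2) a.1 = CEntry.lam ∧ M (rnk b.2) b.1 = CEntry.lam ∧
    greenL pmul (hat a.2) (hat b.2)) ∨
  -- (C5)
  (M (rnk a.2) a.1 = CEntry.rho ∧ M (rnk b.2) b.1 = CEntry.rho ∧
    greenR pmul (hat a.2) (hat b.2)) ∨
  -- (C6)
  (M (rnk a.2) a.1 = CEntry.muDown ∧ M (rnk b.2) b.1 = CEntry.muDown ∧
    hat a.2 = hat b.2 ∧ greenL pmul a.2 b.2) ∨
  -- (C7)
  (M (rnk a.2) a.1 = CEntry.muUp ∧ M (rnk b.2) b.1 = CEntry.muUp ∧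
    hat a.2 = hat b.2 ∧ greenR pmul a.2 b.2) ∨
  -- (C8)
  (M (rnk a.2) a.1 = CEntry.mu ∧ M (rnk b.2) b.1 = CEntry.mu ∧
    hat a.2 = hat b.2 ∧
    ((rnk a.2 = rnk b.2 ∧ Θ (rnk a.2) a.1 b.1) ∨
     (rnk a.2 ≠ rnk b.2 ∧ Θ 0 (a.1 + rnk b.2) (b.1 + rnk a.2) ∧
        ¬ minLE (Θ (rnk a.2)) a.1 ∧ ¬ minLE (Θ (rnk b.2)) b.1) ∨
     (rnk a.2 ≠ rnk b.2 ∧ Θ 0 (a.1 + rnk b.2) (b.1 + rnk a.2) ∧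
        minLE (Θ (rnk a.2)) a.1 ∧ minLE (Θ (rnk b.2)) b.1)))

/-- The C-pair `(Θ,M)` is exceptional with exceptional row `q`, where
`θ_q = (m, m+2d)^♯`. -/
def ExcAt (n : ℕ) (Θ : ℕ → ℕ → ℕ → Prop) (M : ℕ → ℕ → CEntry) (q m d : ℕ) : Prop :=
  2 ≤ q ∧ q ≤ n ∧ 1 ≤ d ∧ Θ q = natCong m (2 * d) ∧
  ((2 < q ∧ M q m = CEntry.nsym q (alternatingGroup (Fin q))) ∨
   (q = 2 ∧ M 2 m = CEntry.delta ∧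
     (M 1 m = CEntry.mu ∨ M 1 m = CEntry.rho ∨ M 1 m = CEntry.lam ∨ M 1 m = CEntry.R) ∧
     (∀ i j, natCong m d i j → Θ 1 i j)))

/-- The exceptional congruence `cgx(Θ,M)` associated with an exceptional C-pair:
`cg(Θ,M)` together with the pairs of (C9). -/
def cgx (n : ℕ) (Θ : ℕ → ℕ → ℕ → Prop) (M : ℕ → ℕ → CEntry) (q m d : ℕ)
    (a b : ℕ × PM n) : Prop :=
  cg n Θ M a b ∨
  (rnk a.2 = q ∧ rnk b.2 = q ∧ natCong m d a.1 b.1 ∧ ¬ Θ q a.1 b.1 ∧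
    greenH pmul a.2 b.2 ∧ pdIn q (fun π => π ∉ alternatingGroup (Fin q)) a.2 b.2)

/-- The Rees relation of a subset `I`. -/
def rees {M : Type*} (I : Set M) (x y : M) : Prop := x = y ∨ (x ∈ I ∧ y ∈ I)

/-- A (possibly empty) ideal of `P_n^Φ`: `MIM ⊆ I`. -/
def tIdeal (n : ℕ) (I : Set (ℕ × PM n)) : Prop :=
  ∀ a b x, x ∈ I → tmul (tmul a x) b ∈ I

/-- `I(σ)`: the union of all ideals `I` of `P_n^Φ` whose Rees congruence is contained
in `σ`. -/
def Isig (n : ℕ) (σ : (ℕ × PM n) → (ℕ × PM n) → Prop) : Set (ℕ × PM n) :=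
  ⋃₀ {I | tIdeal n I ∧ ∀ x y, rees I x y → σ x y}

/-- The 0-twisted partition monoid `P_{n,0}^Φ`, carried by `Option (P_n)` with
`none` the zero element `✗`. -/
noncomputable def mul0 (a b : Option (PM n)) : Option (PM n) :=
  match a, b with
  | some α, some β => if Phi α β = 0 then some (pmul α β) else none
  | _, _ => none

/-- `rank a ≤ q`, where `rank ✗ = -∞`. -/
def rnkLE (a : Option (PM n)) (q : ℕ) : Prop :=
  ∀ α, a = some α → rnk α ≤ q

/-- The Rees congruence `R_q` on `P_{n,0}^Φ`. -/
def ReesQ (q : ℕ) (a b : Option (PM n)) : Prop :=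
  a = b ∨ (rnkLE a q ∧ rnkLE b q)

/-- Lift a relation on `P_n` to `P_{n,0}^Φ = P_n ∪ {✗}`. -/
def lift2 (r : PM n → PM n → Prop) (a b : Option (PM n)) : Prop :=
  ∃ α β, a = some α ∧ b = some β ∧ r α β


section Aux

lemma graphRel_symm (α β : PM n) : Symmetric (graphRel α β) := by
  rintro x y (⟨u, v, h, hx, hy⟩ | ⟨u, v, h, hx, hy⟩)
  · exact Or.inl ⟨v, u, α.iseqv.symm h, hy, hx⟩
  · exact Or.inr ⟨v, u, β.iseqv.symm h, hy, hx⟩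

lemma conn_iff (α β : PM n) (x y : W n) :
    conn α β x y ↔ Relation.ReflTransGen (graphRel α β) x y := by
  constructor
  · intro h
    induction h with
    | rel _ _ h => exact Relation.ReflTransGen.single h
    | refl => exact Relation.ReflTransGen.refl
    | symm a b _ ih => exact (@Relation.ReflTransGen.stdSymm _ _ ⟨graphRel_symm α β⟩).symm _ _ ih
    | trans a b c _ _ ih1 ih2 => exact ih1.trans ih2
  · intro h
    induction h with
    | refl => exact Relation.EqvGen.refl _
    | tail _ h ih => exact Relation.EqvGen.trans _ _ _ ih (Relation.EqvGen.rel _ _ h)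

lemma top_to_bot (α β : PM n) (j : Fin n) :
    ∀ x, Relation.ReflTransGen (graphRel α β) x (Sum.inr (Sum.inr j)) →
    ∀ i : Fin n, x = Sum.inl i →
    ∃ i' j', Relation.ReflTransGen (graphRel α β) x (Sum.inl i') ∧
      α.r (Sum.inl i') (Sum.inr j') := by
  intro x h
  induction h using Relation.ReflTransGen.head_induction_on with
  | refl => intro i hx; simp at hx
  | head hac h ih =>
    intro i hi; subst hi
    rcases hac with ⟨u, v, huv, hx, hy⟩ | ⟨u, v, huv, hx, hy⟩
    · -- α edge
      cases u with
      | inl i0 =>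
        simp only [topMid] at hx
        cases hx
        cases v with
        | inl i1 =>
          simp only [topMid] at hy
          obtain ⟨i', j', hp, hr⟩ := ih i1 hy
          exact ⟨i', j', Relation.ReflTransGen.head
            (Or.inl ⟨Sum.inl i, Sum.inl i1, huv, rfl, hy ▸ rfl⟩) hp, hr⟩
        | inr j1 =>
          exact ⟨i, j1, Relation.ReflTransGen.refl, huv⟩
      | inr j0 => simp [topMid] at hx
    · cases u <;> simp [midBot] at hx

lemma bot_to_top (α β : PM n) (i : Fin n) :
    ∀ x, Relation.ReflTransGen (graphRel α β) x (Sum.inl i) →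
    ∀ j : Fin n, x = Sum.inr (Sum.inr j) →
    ∃ i' j', Relation.ReflTransGen (graphRel α β) x (Sum.inr (Sum.inr j')) ∧
      β.r (Sum.inl i') (Sum.inr j') := by
  intro x h
  induction h using Relation.ReflTransGen.head_induction_on with
  | refl => intro j hx; simp at hx
  | head hac h ih =>
    intro j hj; subst hj
    rcases hac with ⟨u, v, huv, hx, hy⟩ | ⟨u, v, huv, hx, hy⟩
    · cases u <;> simp [topMid] at hx
    · cases u with
      | inl i0 => simp [midBot] at hx
      | inr j0 =>
        simp only [midBot] at hx
        cases hx
        cases v with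
        | inl i1 =>
          exact ⟨i1, j, Relation.ReflTransGen.refl, β.iseqv.symm huv⟩
        | inr j1 =>
          simp only [midBot] at hy
          obtain ⟨i', j', hp, hr⟩ := ih j1 hy
          exact ⟨i', j', Relation.ReflTransGen.head
            (Or.inr ⟨Sum.inr j, Sum.inr j1, huv, rfl, hy ▸ rfl⟩) hp, hr⟩

/-- Every transversal of `αβ` contains an upper endpoint of a transversal of `α`. -/
lemma trans_key_left (α β : PM n) (c : Quotient (pmul α β))
    (h1 : ∃ i : Fin n, Quotient.mk (pmul α β) (Sum.inl i) = c)
    (h2 : ∃ j : Fin n, Quotient.mk (pmul α β) (Sum.inr j) = c) :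
    ∃ i' j', Quotient.mk (pmul α β) (Sum.inl i') = c ∧
      α.r (Sum.inl i') (Sum.inr j') := by
  obtain ⟨i, hi⟩ := h1
  obtain ⟨j, hj⟩ := h2
  have hrel : (pmul α β).r (Sum.inl i) (Sum.inr j) := Quotient.exact (hi.trans hj.symm)
  have hconn : Relation.ReflTransGen (graphRel α β) (Sum.inl i) (Sum.inr (Sum.inr j)) :=
    (conn_iff α β _ _).1 hrel
  obtain ⟨i', j', hp, hr⟩ := top_to_bot α β j _ hconn i rfl
  refine ⟨i', j', ?_, hr⟩
  have : (pmul α β).r (Sum.inl i') (Sum.inl i) :=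
    (connSetoid α β).iseqv.symm ((conn_iff α β _ _).2 hp)
  exact (Quotient.sound this).trans hi

/-- Every transversal of `αβ` contains a lower endpoint of a transversal of `β`. -/
lemma trans_key_right (α β : PM n) (c : Quotient (pmul α β))
    (h1 : ∃ i : Fin n, Quotient.mk (pmul α β) (Sum.inl i) = c)
    (h2 : ∃ j : Fin n, Quotient.mk (pmul α β) (Sum.inr j) = c) :
    ∃ i' j', Quotient.mk (pmul α β) (Sum.inr j') = c ∧
      β.r (Sum.inl i') (Sum.inr j') := by
  obtain ⟨i, hi⟩ := h1
  obtain ⟨j, hj⟩ := h2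
  have hrel : (pmul α β).r (Sum.inr j) (Sum.inl i) := Quotient.exact (hj.trans hi.symm)
  have hconn : Relation.ReflTransGen (graphRel α β) (Sum.inr (Sum.inr j)) (Sum.inl i) :=
    (conn_iff α β _ _).1 hrel
  obtain ⟨i', j', hp, hr⟩ := bot_to_top α β i _ hconn j rfl
  refine ⟨i', j', ?_, hr⟩
  have : (pmul α β).r (Sum.inr j') (Sum.inr j) :=
    (connSetoid α β).iseqv.symm ((conn_iff α β _ _).2 hp)
  exact (Quotient.sound this).trans hj

lemma rnk_le_n (α : PM n) : rnk α ≤ n := by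
  have key : ∀ c : {c : Quotient α //
      (∃ i : Fin n, Quotient.mk α (Sum.inl i) = c) ∧
      ∃ i : Fin n, Quotient.mk α (Sum.inr i) = c},
      ∃ i : Fin n, Quotient.mk α (Sum.inl i) = c.1 := fun c => c.2.1
  have hinj : Function.Injective (fun c => (key c).choose) := by
    intro c1 c2 h
    simp only at h
    have h1 := (key c1).choose_spec
    have h2 := (key c2).choose_spec
    rw [h] at h1
    exact Subtype.ext (h1.symm.trans h2)
  calc rnk α ≤ Nat.card (Fin n) := Nat.card_le_card_of_injective _ hinj
    _ = n := by simp

lemma rnk_pmul_le_left (α β : PM n) : rnk (pmul α β) ≤ rnk α := by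
  set T := {c : Quotient (pmul α β) //
      (∃ i : Fin n, Quotient.mk (pmul α β) (Sum.inl i) = c) ∧
      ∃ i : Fin n, Quotient.mk (pmul α β) (Sum.inr i) = c} with hT
  have key : ∀ c : T, ∃ i' j', Quotient.mk (pmul α β) (Sum.inl i') = c.1 ∧
      α.r (Sum.inl i') (Sum.inr j') :=
    fun c => trans_key_left α β c.1 c.2.1 c.2.2
  let F : T → {c : Quotient α //
      (∃ i : Fin n, Quotient.mk α (Sum.inl i) = c) ∧
      ∃ i : Fin n, Quotient.mk α (Sum.inr i) = c} := fun c =>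
    ⟨Quotient.mk α (Sum.inl (key c).choose),
      ⟨⟨(key c).choose, rfl⟩,
       ⟨(key c).choose_spec.choose,
        Quotient.sound (α.iseqv.symm (key c).choose_spec.choose_spec.2)⟩⟩⟩
  have hinj : Function.Injective F := by
    intro c1 c2 h
    have h12 : Quotient.mk α (Sum.inl (key c1).choose) =
        Quotient.mk α (Sum.inl (key c2).choose) := congrArg Subtype.val h
    have hα : α.r (Sum.inl (key c1).choose) (Sum.inl (key c2).choose) :=
      Quotient.exact h12
    have hedge : graphRel α β (Sum.inl (key c1).choose) (Sum.inl (key c2).choose) :=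
      Or.inl ⟨Sum.inl (key c1).choose, Sum.inl (key c2).choose, hα, rfl, rfl⟩
    have hrel : (pmul α β).r (Sum.inl (key c1).choose) (Sum.inl (key c2).choose) :=
      Relation.EqvGen.rel _ _ hedge
    have e1 := (key c1).choose_spec.choose_spec.1
    have e2 := (key c2).choose_spec.choose_spec.1
    exact Subtype.ext (e1 ▸ e2 ▸ Quotient.sound hrel)
  exact Nat.card_le_card_of_injective F hinj

lemma rnk_pmul_le_right (α β : PM n) : rnk (pmul α β) ≤ rnk β := by
  set T := {c : Quotient (pmul α β) //
      (∃ i : Fin n, Quotient.mk (pmul α β) (Sum.inl i) = c) ∧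
      ∃ i : Fin n, Quotient.mk (pmul α β) (Sum.inr i) = c} with hT
  have key : ∀ c : T, ∃ i' j', Quotient.mk (pmul α β) (Sum.inr j') = c.1 ∧
      β.r (Sum.inl i') (Sum.inr j') :=
    fun c => trans_key_right α β c.1 c.2.1 c.2.2
  let F : T → {c : Quotient β //
      (∃ i : Fin n, Quotient.mk β (Sum.inl i) = c) ∧
      ∃ i : Fin n, Quotient.mk β (Sum.inr i) = c} := fun c =>
    ⟨Quotient.mk β (Sum.inr (key c).choose_spec.choose),
      ⟨⟨(key c).choose, Quotient.sound (key c).choose_spec.choose_spec.2⟩,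
       ⟨(key c).choose_spec.choose, rfl⟩⟩⟩
  have hinj : Function.Injective F := by
    intro c1 c2 h
    have h12 : Quotient.mk β (Sum.inr (key c1).choose_spec.choose) =
        Quotient.mk β (Sum.inr (key c2).choose_spec.choose) := congrArg Subtype.val h
    have hβ : β.r (Sum.inr (key c1).choose_spec.choose)
        (Sum.inr (key c2).choose_spec.choose) := Quotient.exact h12
    have hedge : graphRel α β (Sum.inr (Sum.inr (key c1).choose_spec.choose))
        (Sum.inr (Sum.inr (key c2).choose_spec.choose)) :=
      Or.inr ⟨Sum.inr (key c1).choose_spec.choose,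
        Sum.inr (key c2).choose_spec.choose, hβ, rfl, rfl⟩
    have hrel : (pmul α β).r (Sum.inr (key c1).choose_spec.choose)
        (Sum.inr (key c2).choose_spec.choose) := Relation.EqvGen.rel _ _ hedge
    have e1 := (key c1).choose_spec.choose_spec.1
    have e2 := (key c2).choose_spec.choose_spec.1
    exact Subtype.ext (e1 ▸ e2 ▸ Quotient.sound hrel)
  exact Nat.card_le_card_of_injective F hinj

end Aux

/-- Given a descending chain `θ_0 ⊇ θ_1 ⊇ ⋯ ⊇ θ_n` of congruences on
`(ℕ,+)`, the union over `0 ≤ q ≤ n` of the sets `{((i,α),(j,α)) : α ∈ D_q, (i,j) ∈ θ_q}`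
is a congruence on `P_n^Φ`. -/
theorem chain_congruence (n : ℕ) (hn : 1 ≤ n) (Θ : ℕ → ℕ → ℕ → Prop)
    (hcong : ∀ q, q ≤ n → IsCongruence (· + ·) (Θ q))
    (hchain : ∀ q r, q ≤ r → r ≤ n → ∀ i j, Θ r i j → Θ q i j) :
    IsCongruence (tmul (n := n))
      (fun a b => ∃ q, q ≤ n ∧ rnk a.2 = q ∧ a.2 = b.2 ∧ Θ q a.1 b.1) := by
  constructor
  · constructor
    · intro a
      exact ⟨rnk a.2, rnk_le_n a.2, rfl, rfl, (hcong _ (rnk_le_n a.2)).1.refl a.1⟩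
    · rintro a b ⟨q, hq, hr, he, hθ⟩
      exact ⟨q, hq, he ▸ hr, he.symm, (hcong q hq).1.symm hθ⟩
    · rintro a b c ⟨q, hq, hr, he, hθ⟩ ⟨q', hq', hr', he', hθ'⟩
      have : q = q' := by rw [← hr, ← hr', he]
      exact ⟨q, hq, hr, he.trans he', (hcong q hq).1.trans hθ (this ▸ hθ')⟩
  · rintro ⟨x1, x2⟩ ⟨y1, y2⟩ ⟨a1, a2⟩ ⟨q, hq, hr, he, hθ⟩
    dsimp only at hr he hθ
    subst he
    subst hr
    constructor
    · refine ⟨rnk (pmul a2 x2), le_trans (rnk_pmul_le_right a2 x2) hq, rfl, rfl, ?_⟩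
      have hle : rnk (pmul a2 x2) ≤ n := le_trans (rnk_pmul_le_right a2 x2) hq
      have hθ' : Θ (rnk (pmul a2 x2)) x1 y1 :=
        hchain _ _ (rnk_pmul_le_right a2 x2) hq _ _ hθ
      have h1 := ((hcong _ hle).2 x1 y1 a1 hθ').1
      exact ((hcong _ hle).2 _ _ (Phi a2 x2) h1).2
    · refine ⟨rnk (pmul x2 a2), le_trans (rnk_pmul_le_left x2 a2) hq, rfl, rfl, ?_⟩
      have hle : rnk (pmul x2 a2) ≤ n := le_trans (rnk_pmul_le_left x2 a2) hq
      have hθ' : Θ (rnk (pmul x2 a2)) x1 y1 :=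
        hchain _ _ (rnk_pmul_le_left x2 a2) hq _ _ hθ
      have h1 := ((hcong _ hle).2 x1 y1 a1 hθ').2
      exact ((hcong _ hle).2 _ _ (Phi x2 a2) h1).2

end TPM
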